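/- arXiv:0801.4162 — 2 statements merged into one kernel-verified Lean document; each statement's English description precedes it below -/
import Mathlib

section
/- Let a_1, …, a_r be nonzero integers with |a_i| ≠ |a_j| for i ≠ j, let n_1, …, n_r be nonzero integers, and let σ_1, …, σ_r ∈ {±1}. Then the function t ↦ Σ_{j=1}^r σ_j n_j / √(t² − 4a_j²) is not identically zero on the interval (2·max_j|a_j|, ∞). -/
open Finset

set_option maxHeartbeats 1000000 in
/-- **Nonvanishing of `∑ σ_j n_j / √(t² - 4a_j²)`.** For nonzero integers `a₁,…,a_r`
with `|a_i| ≠ |a_j|` for `i ≠ j`, nonzero integers `n₁,…,n_r` and signs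
`σ₁,…,σ_r ∈ {±1}`, the function `t ↦ ∑_j σ_j n_j / √(t² - 4a_j²)` is not identically
zero on `(2·max_j|a_j|, ∞)`, i.e. there is a point `t` of this interval where it is
nonzero. -/
theorem sum_invSqrt_not_identically_zero
    (r : ℕ) (hr : 0 < r) (a : Fin r → ℤ) (ha : ∀ i, a i ≠ 0)
    (habs : ∀ i j, i ≠ j → |a i| ≠ |a j|)
    (n : Fin r → ℤ) (hn : ∀ i, n i ≠ 0)
    (σ : Fin r → ℤ) (hσ : ∀ i, σ i = 1 ∨ σ i = -1) :
    ∃ t : ℝ, (∀ j : Fin r, 2 * |(a j : ℝ)| < t) ∧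
      (∑ j : Fin r, (σ j : ℝ) * (n j : ℝ) / Real.sqrt (t ^ 2 - 4 * (a j : ℝ) ^ 2)) ≠ 0 := by
  have : Nonempty (Fin r) := ⟨⟨0, hr⟩⟩
  obtain ⟨j0, hj0⟩ := Finite.exists_max (fun j : Fin r => |a j|)
  set M : ℝ := |(a j0 : ℝ)| with hMdef
  have hMpos : 0 < M := abs_pos.mpr (Int.cast_ne_zero.mpr (ha j0))
  -- for j ≠ j0, |a j| < M
  have hlt : ∀ j : Fin r, j ≠ j0 → |(a j : ℝ)| < M := by
    intro j hj
    have h1 : |a j| ≤ |a j0| := hj0 j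
    have h2 : |a j| ≠ |a j0| := habs j j0 hj
    have : |a j| < |a j0| := lt_of_le_of_ne h1 h2
    rw [hMdef, ← Int.cast_abs, ← Int.cast_abs]
    exact_mod_cast this
  have hsq : ∀ j : Fin r, j ≠ j0 → 0 < 4 * M ^ 2 - 4 * (a j : ℝ) ^ 2 := by
    intro j hj
    have h := hlt j hj
    have : (a j : ℝ) ^ 2 < M ^ 2 := by
      rw [← sq_abs ((a j : ℝ))]
      exact pow_lt_pow_left₀ h (abs_nonneg _) (by norm_num)
    nlinarith
  set C : Fin r → ℝ := fun j => |(n j : ℝ)| / Real.sqrt (4 * M ^ 2 - 4 * (a j : ℝ) ^ 2)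
    with hCdef
  set B : ℝ := ∑ j ∈ univ.erase j0, C j with hBdef
  have hBnonneg : 0 ≤ B := Finset.sum_nonneg fun j _ => by positivity
  set δ : ℝ := (1 / (B + 1)) ^ 2 with hδdef
  have hδpos : 0 < δ := by positivity
  set t : ℝ := Real.sqrt (4 * M ^ 2 + δ) with htdef
  have ht2 : t ^ 2 = 4 * M ^ 2 + δ := Real.sq_sqrt (by positivity)
  have htM : 2 * M < t := by
    have h1 : (2 * M) ^ 2 < t ^ 2 := by rw [ht2]; nlinarith
    have h2 : 0 ≤ t := Real.sqrt_nonneg _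
    nlinarith
  have htj : ∀ j : Fin r, 2 * |(a j : ℝ)| < t := by
    intro j
    rcases eq_or_ne j j0 with rfl | hj
    · exact htM
    · have := hlt j hj; linarith
  refine ⟨t, htj, ?_⟩
  -- the main term
  have hMa : M ^ 2 = (a j0 : ℝ) ^ 2 := sq_abs _
  have hT0 : (σ j0 : ℝ) * (n j0 : ℝ) / Real.sqrt (t ^ 2 - 4 * (a j0 : ℝ) ^ 2)
      = (σ j0 : ℝ) * (n j0 : ℝ) * (B + 1) := by
    have h1 : t ^ 2 - 4 * (a j0 : ℝ) ^ 2 = δ := by rw [ht2, ← hMa]; ring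
    rw [h1, hδdef, Real.sqrt_sq (by positivity)]
    field_simp
  have habsσn : ∀ j : Fin r, |(σ j : ℝ) * (n j : ℝ)| = |(n j : ℝ)| := by
    intro j
    rcases hσ j with h | h <;> rw [h] <;> push_cast <;> simp [abs_mul]
  -- bound on the other terms
  have hbound : ∀ j ∈ univ.erase j0,
      |(σ j : ℝ) * (n j : ℝ) / Real.sqrt (t ^ 2 - 4 * (a j : ℝ) ^ 2)| ≤ C j := by
    intro j hj
    have hjne : j ≠ j0 := Finset.ne_of_mem_erase hj
    have h4 : 0 < 4 * M ^ 2 - 4 * (a j : ℝ) ^ 2 := hsq j hjne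
    have hle : 4 * M ^ 2 - 4 * (a j : ℝ) ^ 2 ≤ t ^ 2 - 4 * (a j : ℝ) ^ 2 := by
      rw [ht2]; linarith
    have hs1 : 0 < Real.sqrt (4 * M ^ 2 - 4 * (a j : ℝ) ^ 2) := Real.sqrt_pos.mpr h4
    have hs2 : Real.sqrt (4 * M ^ 2 - 4 * (a j : ℝ) ^ 2)
        ≤ Real.sqrt (t ^ 2 - 4 * (a j : ℝ) ^ 2) := Real.sqrt_le_sqrt hle
    rw [abs_div, habsσn j, abs_of_nonneg (Real.sqrt_nonneg _), hCdef]
    exact div_le_div_of_nonneg_left (abs_nonneg _) hs1 hs2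
  -- split the sum
  rw [← Finset.add_sum_erase _ _ (Finset.mem_univ j0)]
  intro hzero
  have hS : |∑ j ∈ univ.erase j0,
      (σ j : ℝ) * (n j : ℝ) / Real.sqrt (t ^ 2 - 4 * (a j : ℝ) ^ 2)| ≤ B := by
    calc _ ≤ ∑ j ∈ univ.erase j0,
        |(σ j : ℝ) * (n j : ℝ) / Real.sqrt (t ^ 2 - 4 * (a j : ℝ) ^ 2)| :=
          Finset.abs_sum_le_sum_abs _ _
      _ ≤ B := Finset.sum_le_sum hbound
  have hT0big : B + 1 ≤ |(σ j0 : ℝ) * (n j0 : ℝ) / Real.sqrt (t ^ 2 - 4 * (a j0 : ℝ) ^ 2)| := by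
    rw [hT0, abs_mul, habsσn j0]
    have hn1 : (1 : ℝ) ≤ |(n j0 : ℝ)| := by
      rw [← Int.cast_abs]
      exact_mod_cast Int.one_le_abs (hn j0)
    have : |B + 1| = B + 1 := abs_of_nonneg (by linarith)
    nlinarith [abs_nonneg ((n j0 : ℝ))]
  have heq : (σ j0 : ℝ) * (n j0 : ℝ) / Real.sqrt (t ^ 2 - 4 * (a j0 : ℝ) ^ 2)
      = -∑ j ∈ univ.erase j0, (σ j : ℝ) * (n j : ℝ) / Real.sqrt (t ^ 2 - 4 * (a j : ℝ) ^ 2) := by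
    linarith [hzero]
  rw [heq, abs_neg] at hT0big
  linarith
end

section
/- Let p be an odd prime, k ≥ 2, q = p^k, and let j be an integer with 1 ≤ j ≤ ⌊k/2⌋. For multiplicative characters χ, χ' of (ℤ/qℤ)^* with parameters t_χ, t_{χ'}, one has t_χ ≡ t_{χ'} (mod p^j) if and only if χ'χ^{-1} ∈ C_p(k, k−j), where C_p(k, j) = {χ : χ(x) = 1 for all x ∈ (ℤ/qℤ)^* with x ≡ 1 (mod p^j)}. -/
open Complex Finset

/-- The standard additive character `e_q(x) = exp(2πix/q)` of `ℤ/qℤ`. -/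
noncomputable def eZMod (q : ℕ) (x : ZMod q) : ℂ :=
  Complex.exp (2 * Real.pi * Complex.I * x.val / q)

lemma eZMod_natCast (N : ℕ) [NeZero N] (n : ℕ) :
    eZMod N (n : ZMod N) = Complex.exp (2 * Real.pi * Complex.I * n / N) := by
  rw [eZMod, ZMod.val_natCast, Complex.exp_eq_exp_iff_exists_int]
  refine ⟨-((n / N : ℕ) : ℤ), ?_⟩
  have hN : (N : ℂ) ≠ 0 := Nat.cast_ne_zero.mpr (NeZero.ne N)
  have h : (n : ℂ) = (N : ℂ) * ((n / N : ℕ) : ℂ) + ((n % N : ℕ) : ℂ) := by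
    exact_mod_cast congrArg (Nat.cast : ℕ → ℂ) (Nat.div_add_mod n N).symm
  rw [h]
  simp only [Int.cast_neg, Int.cast_natCast]
  field_simp
  ring

lemma eZMod_ne_zero (N : ℕ) (a : ZMod N) : eZMod N a ≠ 0 := Complex.exp_ne_zero _

lemma eZMod_add (N : ℕ) [NeZero N] (a b : ZMod N) :
    eZMod N (a + b) = eZMod N a * eZMod N b := by
  have ha : a = ((a.val : ℕ) : ZMod N) := by rw [ZMod.natCast_val, ZMod.cast_id]
  have hb : b = ((b.val : ℕ) : ZMod N) := by rw [ZMod.natCast_val, ZMod.cast_id]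
  rw [ha, hb, ← Nat.cast_add, eZMod_natCast, eZMod_natCast, eZMod_natCast, ← Complex.exp_add]
  congr 1
  push_cast
  ring

lemma eZMod_sub (N : ℕ) [NeZero N] (a b : ZMod N) :
    eZMod N a * (eZMod N b)⁻¹ = eZMod N (a - b) := by
  have h := eZMod_add N (a - b) b
  rw [sub_add_cancel] at h
  rw [h, mul_inv_cancel_right₀ (eZMod_ne_zero N b)]

lemma eZMod_eq_one_iff (N : ℕ) [NeZero N] (a : ZMod N) : eZMod N a = 1 ↔ a = 0 := by
  constructor
  · intro h
    rw [eZMod, Complex.exp_eq_one_iff] at h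
    obtain ⟨m, hm⟩ := h
    obtain ⟨v, hv⟩ : ∃ v, a.val = v := ⟨_, rfl⟩
    rw [hv] at hm
    have h2 : (2 * (Real.pi : ℂ) * Complex.I) ≠ 0 := by
      simp [Real.pi_ne_zero, Complex.I_ne_zero]
    rw [mul_div_assoc] at hm
    have hm' : ((v : ℂ) / N) = m := mul_left_cancel₀ h2 (hm.trans (mul_comm _ _))
    have hN : (N : ℂ) ≠ 0 := Nat.cast_ne_zero.mpr (NeZero.ne N)
    have hvc : ((v : ℂ)) = m * N := by
      field_simp at hm'; exact hm'.trans (mul_comm _ _)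
    have hvz : ((v : ℤ)) = m * N := by exact_mod_cast hvc
    have hdvd : N ∣ v := by
      have : (N : ℤ) ∣ (v : ℤ) := ⟨m, by linarith [hvz]⟩
      exact_mod_cast this
    have hvlt : v < N := hv ▸ ZMod.val_lt a
    have : a.val = 0 := by rw [hv]; exact Nat.eq_zero_of_dvd_of_lt hdvd hvlt
    exact (ZMod.val_eq_zero a).mp this
  · rintro rfl
    simp [eZMod]

lemma eZMod_pow_mul (p j m : ℕ) (hp : 0 < p) (hjm : j ≤ m) [NeZero (p ^ m)] [NeZero (p ^ j)]
    (c : ZMod (p ^ m)) :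
    eZMod (p ^ m) ((p : ZMod (p ^ m)) ^ (m - j) * c) = eZMod (p ^ j) ((c.val : ZMod (p ^ j))) := by
  have h1 : ((p : ZMod (p ^ m)) ^ (m - j) * c) = (((p ^ (m - j) * c.val : ℕ)) : ZMod (p ^ m)) := by
    push_cast
    rw [ZMod.natCast_val, ZMod.cast_id]
  rw [h1, eZMod_natCast, eZMod_natCast]
  have hsplit : (p : ℂ) ^ m = (p : ℂ) ^ (m - j) * (p : ℂ) ^ j := by
    rw [← pow_add]; congr 1; omega
  have hpc : (p : ℂ) ≠ 0 := Nat.cast_ne_zero.mpr hp.ne'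
  have hpj : ((p : ℂ)) ^ j ≠ 0 := pow_ne_zero _ hpc
  have hpmj : ((p : ℂ)) ^ (m - j) ≠ 0 := pow_ne_zero _ hpc
  congr 1
  push_cast
  rw [hsplit]
  field_simp

lemma natCast_pow_mul_mod (p k l m : ℕ) (hlm : l + m = k) (c : ℕ) :
    ((p ^ l * (c % p ^ m) : ℕ) : ZMod (p ^ k)) = ((p ^ l * c : ℕ) : ZMod (p ^ k)) := by
  rw [ZMod.natCast_eq_natCast_iff]
  have h : p ^ l * (c % p ^ m) ≡ p ^ l * c [MOD p ^ l * p ^ m] :=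
    Nat.ModEq.mul_left' (p ^ l) (Nat.mod_modEq c (p ^ m))
  rwa [← pow_add, hlm] at h

lemma key_param (p k j : ℕ) [Fact p.Prime] (hk : 2 ≤ k) (hj : 1 ≤ j) (hjl : j ≤ k / 2)
    (χ : MulChar (ZMod (p ^ k)) ℂ) (t : ZMod (p ^ (k - k / 2)))
    (hte : k % 2 = 0 → ∀ x : ZMod (p ^ (k - k / 2)),
      χ (1 + (p : ZMod (p ^ k)) ^ (k / 2) * (x.val : ZMod (p ^ k))) =
        eZMod (p ^ (k - k / 2)) (t * x))
    (hto : k % 2 = 1 → ∀ x : ZMod (p ^ (k - k / 2)),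
      χ (1 + (p : ZMod (p ^ k)) ^ (k / 2) * (x.val : ZMod (p ^ k)) +
          (p : ZMod (p ^ k)) ^ (2 * (k / 2)) *
            (((x ^ 2 * (2 : ZMod (p ^ (k - k / 2)))⁻¹).val : ZMod (p ^ k)))) =
        eZMod (p ^ (k - k / 2)) (t * x))
    (y : ℕ) :
    χ ((1 + p ^ (k - j) * y : ℕ) : ZMod (p ^ k)) =
      eZMod (p ^ j) ((t.val : ZMod (p ^ j)) * ((y : ℕ) : ZMod (p ^ j))) := by
  have hp : p.Prime := Fact.out
  haveI : NeZero (p ^ (k - k / 2)) := NeZero.of_pos (pow_pos hp.pos _)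
  haveI : NeZero (p ^ j) := NeZero.of_pos (pow_pos hp.pos _)
  have hjm : j ≤ k - k / 2 := by omega
  have hlm : k / 2 + (k - k / 2) = k := by omega
  set X : ZMod (p ^ (k - k / 2)) := ((p ^ (k - k / 2 - j) * y : ℕ) : ZMod (p ^ (k - k / 2)))
    with hX
  have hA : (1 : ZMod (p ^ k)) + (p : ZMod (p ^ k)) ^ (k / 2) * (X.val : ZMod (p ^ k)) =
      ((1 + p ^ (k - j) * y : ℕ) : ZMod (p ^ k)) := by
    have hXval : X.val = (p ^ (k - k / 2 - j) * y) % p ^ (k - k / 2) := ZMod.val_natCast _ _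
    have h1 : (p : ZMod (p ^ k)) ^ (k / 2) * (X.val : ZMod (p ^ k)) =
        ((p ^ (k / 2) * ((p ^ (k - k / 2 - j) * y) % p ^ (k - k / 2)) : ℕ) : ZMod (p ^ k)) := by
      rw [hXval]; push_cast; ring
    rw [h1, natCast_pow_mul_mod p k (k / 2) (k - k / 2) hlm, ← mul_assoc, ← pow_add]
    have h2 : k / 2 + (k - k / 2 - j) = k - j := by omega
    rw [h2]
    push_cast
    ring
  have hRHS : eZMod (p ^ (k - k / 2)) (t * X) =
      eZMod (p ^ j) ((t.val : ZMod (p ^ j)) * ((y : ℕ) : ZMod (p ^ j))) := by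
    have hX' : X = (p : ZMod (p ^ (k - k / 2))) ^ (k - k / 2 - j) *
        ((y : ℕ) : ZMod (p ^ (k - k / 2))) := by
      rw [hX]; push_cast; ring
    have h3 : t * X = (p : ZMod (p ^ (k - k / 2))) ^ (k - k / 2 - j) *
        (t * ((y : ℕ) : ZMod (p ^ (k - k / 2)))) := by
      rw [hX']; ring
    rw [h3, eZMod_pow_mul p j (k - k / 2) hp.pos hjm]
    congr 1
    have hdvd : p ^ j ∣ p ^ (k - k / 2) := pow_dvd_pow p hjm
    have h4 : (((t * ((y : ℕ) : ZMod (p ^ (k - k / 2)))).val : ℕ) : ZMod (p ^ j)) =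
        ZMod.castHom hdvd (ZMod (p ^ j)) (t * ((y : ℕ) : ZMod (p ^ (k - k / 2)))) := by
      rw [ZMod.castHom_apply, ZMod.natCast_val]
    rw [h4, map_mul, map_natCast, ZMod.castHom_apply, ← ZMod.natCast_val]
  rcases Nat.even_or_odd k with he | ho
  · have he' : k % 2 = 0 := Nat.even_iff.mp he
    have h := hte he' X
    rw [hA] at h
    rw [h, hRHS]
  · have ho' : k % 2 = 1 := Nat.odd_iff.mp ho
    have hquad : (p : ZMod (p ^ k)) ^ (2 * (k / 2)) *
        (((X ^ 2 * (2 : ZMod (p ^ (k - k / 2)))⁻¹).val : ℕ) : ZMod (p ^ k)) = 0 := by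
      set c : ZMod (p ^ (k - k / 2)) := X ^ 2 * (2 : ZMod (p ^ (k - k / 2)))⁻¹ with hc
      have hdvd1 : p ∣ p ^ (k - k / 2) := dvd_pow_self p (by omega : k - k / 2 ≠ 0)
      have hcp : ((c.val : ℕ) : ZMod p) = 0 := by
        have h5 : ((c.val : ℕ) : ZMod p) = ZMod.castHom hdvd1 (ZMod p) c := by
          rw [ZMod.castHom_apply, ZMod.natCast_val]
        rw [h5, hc, map_mul, map_pow]
        have hX0 : ZMod.castHom hdvd1 (ZMod p) X = 0 := by
          rw [hX, map_natCast, ZMod.natCast_eq_zero_iff]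
          exact Dvd.dvd.mul_right (dvd_pow_self p (by omega : k - k / 2 - j ≠ 0)) y
        rw [hX0]
        ring
      obtain ⟨w, hw⟩ := (ZMod.natCast_eq_zero_iff c.val p).mp hcp
      rw [hw]
      have hpk : ((p : ZMod (p ^ k))) ^ k = 0 := by
        rw [← Nat.cast_pow, ZMod.natCast_self]
      calc (p : ZMod (p ^ k)) ^ (2 * (k / 2)) * ((p * w : ℕ) : ZMod (p ^ k))
          = (p : ZMod (p ^ k)) ^ (2 * (k / 2) + 1) * w := by push_cast; ring
        _ = 0 := by rw [(by omega : 2 * (k / 2) + 1 = k), hpk, zero_mul]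
    have h := hto ho' X
    rw [hquad, add_zero, hA] at h
    rw [h, hRHS]

/-- **Congruence of parameters.** Let `p` be an odd prime, `k ≥ 2`, `q = p^k`,
`1 ≤ j ≤ ⌊k/2⌋`, and let `χ, χ'` be multiplicative characters of `(ℤ/qℤ)^*` with
parameters `t, t'`. Then `t ≡ t' (mod p^j)` if and only if `χ'χ⁻¹ ∈ C_p(k, k-j)`,
i.e. `χ'χ⁻¹` is trivial on all units `x ≡ 1 (mod p^{k-j})`. -/
theorem param_congruent_iff
    (p k j : ℕ) [Fact p.Prime] (hodd : p ≠ 2) (hk : 2 ≤ k) (hj : 1 ≤ j) (hjl : j ≤ k / 2)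
    (χ χ' : MulChar (ZMod (p ^ k)) ℂ) (t t' : ZMod (p ^ (k - k / 2)))
    (hte : k % 2 = 0 → ∀ x : ZMod (p ^ (k - k / 2)),
      χ (1 + (p : ZMod (p ^ k)) ^ (k / 2) * (x.val : ZMod (p ^ k))) =
        eZMod (p ^ (k - k / 2)) (t * x))
    (hto : k % 2 = 1 → ∀ x : ZMod (p ^ (k - k / 2)),
      χ (1 + (p : ZMod (p ^ k)) ^ (k / 2) * (x.val : ZMod (p ^ k)) +
          (p : ZMod (p ^ k)) ^ (2 * (k / 2)) *
            (((x ^ 2 * (2 : ZMod (p ^ (k - k / 2)))⁻¹).val : ZMod (p ^ k)))) =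
        eZMod (p ^ (k - k / 2)) (t * x))
    (hte' : k % 2 = 0 → ∀ x : ZMod (p ^ (k - k / 2)),
      χ' (1 + (p : ZMod (p ^ k)) ^ (k / 2) * (x.val : ZMod (p ^ k))) =
        eZMod (p ^ (k - k / 2)) (t' * x))
    (hto' : k % 2 = 1 → ∀ x : ZMod (p ^ (k - k / 2)),
      χ' (1 + (p : ZMod (p ^ k)) ^ (k / 2) * (x.val : ZMod (p ^ k)) +
          (p : ZMod (p ^ k)) ^ (2 * (k / 2)) *
            (((x ^ 2 * (2 : ZMod (p ^ (k - k / 2)))⁻¹).val : ZMod (p ^ k)))) =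
        eZMod (p ^ (k - k / 2)) (t' * x)) :
    ((t.val : ZMod (p ^ j)) = (t'.val : ZMod (p ^ j))) ↔
      (∀ x : (ZMod (p ^ k))ˣ, (((x : ZMod (p ^ k)).val : ZMod (p ^ (k - j)))) = 1 →
        (χ' * χ⁻¹) (x : ZMod (p ^ k)) = 1) := by
  have hp : p.Prime := Fact.out
  haveI : NeZero (p ^ j) := NeZero.of_pos (pow_pos hp.pos _)
  have hkj1 : 1 ≤ k - j := by omega
  have hpkj : 1 < p ^ (k - j) := Nat.one_lt_pow (by omega) hp.one_lt
  constructor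
  · intro h x hx
    obtain ⟨y, hy⟩ : ∃ y : ℕ, (x : ZMod (p ^ k)).val = 1 + p ^ (k - j) * y := by
      refine ⟨(x : ZMod (p ^ k)).val / p ^ (k - j), ?_⟩
      have h1 := Nat.div_add_mod ((x : ZMod (p ^ k)).val) (p ^ (k - j))
      have h2 : (x : ZMod (p ^ k)).val % p ^ (k - j) = 1 := by
        have h3 : (((x : ZMod (p ^ k)).val : ℕ) : ZMod (p ^ (k - j))) =
            ((1 : ℕ) : ZMod (p ^ (k - j))) := by rw [Nat.cast_one]; exact hx
        have h4 := (ZMod.natCast_eq_natCast_iff _ _ _).mp h3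
        have h5 : 1 % p ^ (k - j) = 1 := Nat.mod_eq_of_lt hpkj
        rw [Nat.ModEq, h5] at h4
        omega
      omega
    have hxx : ((x : ZMod (p ^ k))) = ((1 + p ^ (k - j) * y : ℕ) : ZMod (p ^ k)) := by
      conv_lhs => rw [← ZMod.cast_id _ ((x : ZMod (p ^ k))), ← ZMod.natCast_val]
      rw [hy]
    rw [MulChar.mul_apply, MulChar.inv_apply_eq_inv, Ring.inverse_eq_inv, hxx,
      key_param p k j hk hj hjl χ t hte hto y, key_param p k j hk hj hjl χ' t' hte' hto' y,
      eZMod_sub, h, sub_self]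
    simp [eZMod]
  · intro H
    have hcop : Nat.Coprime (1 + p ^ (k - j)) (p ^ k) := by
      have h1 : Nat.Coprime (1 + p ^ (k - j)) p := by
        obtain ⟨d, hd⟩ : ∃ d, k - j = d + 1 := ⟨k - j - 1, by omega⟩
        rw [hd, pow_succ']
        exact (Nat.coprime_add_mul_left_left 1 p _).mpr (Nat.coprime_one_left p)
      exact Nat.Coprime.pow_right k h1
    set u := ZMod.unitOfCoprime _ hcop with hudef
    have hu : ((u : ZMod (p ^ k))) = ((1 + p ^ (k - j) : ℕ) : ZMod (p ^ k)) :=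
      ZMod.coe_unitOfCoprime _ hcop
    have hcond : (((u : ZMod (p ^ k)).val : ZMod (p ^ (k - j)))) = 1 := by
      have hdvd : p ^ (k - j) ∣ p ^ k := pow_dvd_pow p (by omega)
      have hz : ((p ^ (k - j) : ℕ) : ZMod (p ^ (k - j))) = 0 := ZMod.natCast_self _
      rw [ZMod.natCast_val, ← ZMod.castHom_apply (h := hdvd), hu, map_natCast]
      push_cast at hz ⊢
      rw [hz, add_zero]
    have h1 := H u hcond
    have k1 := key_param p k j hk hj hjl χ t hte hto 1
    have k1' := key_param p k j hk hj hjl χ' t' hte' hto' 1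
    simp only [mul_one, Nat.cast_one] at k1 k1'
    rw [MulChar.mul_apply, MulChar.inv_apply_eq_inv, Ring.inverse_eq_inv, hu, k1, k1',
      eZMod_sub] at h1
    have h2 := (eZMod_eq_one_iff _ _).mp h1
    exact (sub_eq_zero.mp h2).symm
end
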